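/- (Proposition 2.1, BSDE part.) Assume (A1) and that (A2) holds at the point x ∈ D. If (Ȳ¹, M̄¹) and (Ȳ², M̄²) are both solutions of the perpetual BSDE at x, then Ȳ¹ and Ȳ² are indistinguishable and M̄¹ and M̄² are indistinguishable. -/

import Mathlib

open MeasureTheory ProbabilityTheory Filter Set
open scoped ENNReal NNReal Classical

noncomputable section

namespace Perp

variable {Ω : Type*}

/-- Euclidean norm on `Fin d → ℝ`. -/
def enorm {d : ℕ} (x : Fin d → ℝ) : ℝ := Real.sqrt (∑ i, (x i) ^ 2)

/-- The open positive orthant `D`. -/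
def posOrth (d : ℕ) : Set (Fin d → ℝ) := {x | ∀ i, 0 < x i}

/-- Assumption (A1): `ψ` is nonnegative, convex and Lipschitz with constant `L`. -/
structure A1 {d : ℕ} (ψ : (Fin d → ℝ) → ℝ) (L : ℝ) : Prop where
  nonneg : ∀ x, 0 ≤ ψ x
  convex : ConvexOn ℝ Set.univ ψ
  lip : ∀ x y, |ψ x - ψ y| ≤ L * enorm (x - y)

/-- `B` is a standard `d`-dimensional Brownian motion with respect to the filtration `F`:
independent coordinates, continuous paths started at `0`, adapted to `F`, Gaussian increments
that are independent of the past. -/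
def IsStdBM {d : ℕ} [mΩ : MeasurableSpace Ω] (P : Measure Ω) (F : Filtration ℝ mΩ)
    (B : Fin d → ℝ → Ω → ℝ) : Prop :=
  (∀ i ω, B i 0 ω = 0) ∧
  (∀ i ω, Continuous fun t => B i t ω) ∧
  (∀ i, Adapted F (fun t => B i t)) ∧
  (∀ s t : ℝ, 0 ≤ s → s ≤ t →
    Indep (MeasurableSpace.comap (fun ω => fun i => B i t ω - B i s ω) inferInstance) (F s) P) ∧
  (∀ i, ∀ s t : ℝ, 0 ≤ s → s ≤ t →
    Measure.map (fun ω => B i t ω - B i s ω) P = gaussianReal 0 (Real.toNNReal (t - s))) ∧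
  iIndepFun (fun i ω => fun t : ℝ => B i t ω) P

/-- The Black–Scholes price process started at `x` at time `0`. -/
def price {d : ℕ} (r : ℝ) (δ : Fin d → ℝ) (a σm : Matrix (Fin d) (Fin d) ℝ)
    (B : Fin d → ℝ → Ω → ℝ) (x : Fin d → ℝ) (t : ℝ) (ω : Ω) : Fin d → ℝ :=
  fun i => x i * Real.exp ((r - δ i - a i i / 2) * t + ∑ j, σm i j * B j t ω)

/-- `Ψ = -rψ + L_BS ψ` at points of (pointwise second-order) twice differentiability, `0`
elsewhere. -/
def PsiFun {d : ℕ} (r : ℝ) (δ : Fin d → ℝ) (a : Matrix (Fin d) (Fin d) ℝ)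
    (ψ : (Fin d → ℝ) → ℝ) (x : Fin d → ℝ) : ℝ :=
  if DifferentiableAt ℝ ψ x ∧ DifferentiableAt ℝ (fderiv ℝ ψ) x then
    -r * ψ x + ∑ i, (r - δ i) * x i * fderiv ℝ ψ x (Pi.single i 1)
      + (1 / 2) * ∑ i, ∑ j,
          a i j * x i * x j * fderiv ℝ (fderiv ℝ ψ) x (Pi.single i 1) (Pi.single j 1)
  else 0

/-- `Ψ⁻ = max (-Ψ, 0)`. -/
def PsiMinus {d : ℕ} (r : ℝ) (δ : Fin d → ℝ) (a : Matrix (Fin d) (Fin d) ℝ)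
    (ψ : (Fin d → ℝ) → ℝ) (x : Fin d → ℝ) : ℝ :=
  max (-(PsiFun r δ a ψ x)) 0

/-- `Φ(x, y) = Ψ⁻(x) 1_{y ≤ ψ(x)}`. -/
def Phi {d : ℕ} (r : ℝ) (δ : Fin d → ℝ) (a : Matrix (Fin d) (Fin d) ℝ)
    (ψ : (Fin d → ℝ) → ℝ) (x : Fin d → ℝ) (y : ℝ) : ℝ :=
  PsiMinus r δ a ψ x * (if y ≤ ψ x then 1 else 0)

/-- Finite-horizon value `V_T` of the American option for the price process `X`. -/
def valueT {d : ℕ} [mΩ : MeasurableSpace Ω] (P : Measure Ω) (F : Filtration ℝ mΩ) (r : ℝ)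
    (X : ℝ → Ω → (Fin d → ℝ)) (ψ : (Fin d → ℝ) → ℝ) (T : ℝ) : ℝ :=
  sSup {v | ∃ τ : Ω → ℝ, IsStoppingTime F (fun ω => (τ ω : WithTop ℝ)) ∧ (∀ ω, τ ω ∈ Set.Icc 0 T) ∧
    v = ∫ ω, Real.exp (-r * τ ω) * ψ (X (τ ω) ω) ∂P}

/-- `[0,∞]`-valued stopping times. -/
def IsStoppingTimeE [mΩ : MeasurableSpace Ω] (F : Filtration ℝ mΩ) (τ : Ω → ℝ≥0∞) : Prop :=
  ∀ t : ℝ, 0 ≤ t → MeasurableSet[F t] {ω | τ ω ≤ ENNReal.ofReal t}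

/-- Perpetual value `V` of the American option for the price process `X`. -/
def valueInf {d : ℕ} [mΩ : MeasurableSpace Ω] (P : Measure Ω) (F : Filtration ℝ mΩ) (r : ℝ)
    (X : ℝ → Ω → (Fin d → ℝ)) (ψ : (Fin d → ℝ) → ℝ) : ℝ :=
  sSup {v | ∃ τ : Ω → ℝ≥0∞, IsStoppingTimeE F τ ∧
    v = ∫ ω, Set.indicator {ω' | τ ω' < ⊤}
      (fun ω' => Real.exp (-r * (τ ω').toReal) * ψ (X ((τ ω').toReal) ω')) ω ∂P}

/-- Assumption (A2) at the point `x` (for the price process `X` started at `x`). -/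
def A2at {d : ℕ} [mΩ : MeasurableSpace Ω] (P : Measure Ω) (r : ℝ) (δ : Fin d → ℝ)
    (a : Matrix (Fin d) (Fin d) ℝ) (ψ : (Fin d → ℝ) → ℝ) (X : ℝ → Ω → (Fin d → ℝ)) : Prop :=
  Tendsto (fun t : ℝ => ∫ ω, Real.exp (-r * t) * ψ (X t ω) ∂P) atTop (nhds 0) ∧
  (∫⁻ ω, ∫⁻ t in Set.Ioi (0 : ℝ),
      ENNReal.ofReal (Real.exp (-r * t) * PsiMinus r δ a ψ (X t ω)) ∂volume ∂P) < ⊤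

/-- Class (D): the family of values of `Y` at finite nonnegative stopping times is uniformly
integrable. -/
def ClassD [mΩ : MeasurableSpace Ω] (P : Measure Ω) (F : Filtration ℝ mΩ)
    (Y : ℝ → Ω → ℝ) : Prop :=
  UniformIntegrable
    (fun (τ : {τ : Ω → ℝ // IsStoppingTime F (fun ω => (τ ω : WithTop ℝ)) ∧ ∀ ω, 0 ≤ τ ω}) ω => Y (τ.1 ω) ω) 1 P

/-- Continuous local martingale property (via a localizing sequence of stopping times). -/
def IsLocalMartingale [mΩ : MeasurableSpace Ω] (P : Measure Ω) (F : Filtration ℝ mΩ)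
    (M : ℝ → Ω → ℝ) : Prop :=
  ∃ τ : ℕ → Ω → ℝ, (∀ n, IsStoppingTime F (fun ω => (τ n ω : WithTop ℝ))) ∧ (∀ n ω, 0 ≤ τ n ω) ∧
    (∀ n ω, τ n ω ≤ τ (n + 1) ω) ∧ (∀ ω, Tendsto (fun n => τ n ω) atTop atTop) ∧
    ∀ n, Martingale (fun t ω => M (min t (τ n ω)) ω) F P

/-- Solution of the perpetual BSDE (3.5) (with generator `Φf`) for the price process `X`. -/
structure BSDESol {d : ℕ} [mΩ : MeasurableSpace Ω] (P : Measure Ω) (F : Filtration ℝ mΩ)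
    (r : ℝ) (X : ℝ → Ω → (Fin d → ℝ)) (Φf : (Fin d → ℝ) → ℝ → ℝ)
    (Y M : ℝ → Ω → ℝ) : Prop where
  contY : ∀ ω, Continuous fun t => Y t ω
  contM : ∀ ω, Continuous fun t => M t ω
  adaptedY : Adapted F Y
  adaptedM : Adapted F M
  classD : ClassD P F Y
  locMart : IsLocalMartingale P F M
  M0 : ∀ ω, M 0 ω = 0
  intFin : ∀ᵐ ω ∂P, ∀ T : ℝ, 0 < T → IntegrableOn
    (fun s => Real.exp (-r * s) * Φf (X s ω) (Real.exp (r * s) * Y s ω)) (Set.Icc 0 T) volume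
  eqn : ∀ T : ℝ, 0 < T → ∀ᵐ ω ∂P, ∀ t ∈ Set.Icc (0 : ℝ) T,
    Y t ω = Y T ω
      + (∫ s in t..T, Real.exp (-r * s) * Φf (X s ω) (Real.exp (r * s) * Y s ω))
      - (M T ω - M t ω)
  limY : ∀ᵐ ω ∂P, Tendsto (fun T => Y T ω) atTop (nhds 0)

/-- Solution of the perpetual reflected BSDE (3.3) for the price process `X`, with lower
barrier `L̄_t = e^{-rt} ψ(X_t)`.  The minimality (Stieltjes) condition
`∫_0^T (Ȳ_t - L̄_t) dK̄_t = 0` is expressed equivalently (for continuous paths and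
continuous nondecreasing `K̄`) by: `K̄` is locally constant at every time where `Ȳ_t > L̄_t`. -/
structure RBSDESol {d : ℕ} [mΩ : MeasurableSpace Ω] (P : Measure Ω) (F : Filtration ℝ mΩ)
    (r : ℝ) (X : ℝ → Ω → (Fin d → ℝ)) (ψ : (Fin d → ℝ) → ℝ)
    (Y K M : ℝ → Ω → ℝ) : Prop where
  contY : ∀ ω, Continuous fun t => Y t ω
  contK : ∀ ω, Continuous fun t => K t ω
  contM : ∀ ω, Continuous fun t => M t ω
  adaptedY : Adapted F Y
  adaptedK : Adapted F K
  adaptedM : Adapted F M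
  classD : ClassD P F Y
  locMart : IsLocalMartingale P F M
  M0 : ∀ ω, M 0 ω = 0
  K0 : ∀ ω, K 0 ω = 0
  monoK : ∀ ω, MonotoneOn (fun t => K t ω) (Set.Ici 0)
  eqn : ∀ T : ℝ, 0 < T → ∀ᵐ ω ∂P, ∀ t ∈ Set.Icc (0 : ℝ) T,
    Y t ω = Y T ω + (K T ω - K t ω) - (M T ω - M t ω)
  barrier : ∀ᵐ ω ∂P, ∀ t : ℝ, 0 ≤ t → Real.exp (-r * t) * ψ (X t ω) ≤ Y t ω
  minimality : ∀ᵐ ω ∂P, ∀ t : ℝ, 0 ≤ t → Real.exp (-r * t) * ψ (X t ω) < Y t ω →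
    ∃ ε > 0, ∀ s ∈ Set.Icc (t - ε) (t + ε) ∩ Set.Ici (0 : ℝ), K s ω = K t ω
  limY : ∀ᵐ ω ∂P, Tendsto (fun T => Y T ω) atTop (nhds 0)

/-- The value function `V_T` as a function of the initial price. -/
def VTfun {d : ℕ} [mΩ : MeasurableSpace Ω] (P : Measure Ω) (F : Filtration ℝ mΩ)
    (r : ℝ) (δ : Fin d → ℝ) (a σm : Matrix (Fin d) (Fin d) ℝ) (B : Fin d → ℝ → Ω → ℝ)
    (ψ : (Fin d → ℝ) → ℝ) (T : ℝ) (y : Fin d → ℝ) : ℝ :=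
  valueT P F r (price r δ a σm B y) ψ T

/-- The perpetual value function `V` as a function of the initial price. -/
def Vfun {d : ℕ} [mΩ : MeasurableSpace Ω] (P : Measure Ω) (F : Filtration ℝ mΩ)
    (r : ℝ) (δ : Fin d → ℝ) (a σm : Matrix (Fin d) (Fin d) ℝ) (B : Fin d → ℝ → Ω → ℝ)
    (ψ : (Fin d → ℝ) → ℝ) (y : Fin d → ℝ) : ℝ :=
  valueInf P F r (price r δ a σm B y) ψ

/-- The process `Ỹ^n`: `Ỹ^n_t = e^{-rt} V_{n-t}(X^x_t)` for `t < n` and `0` for `t ≥ n`. -/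
def Ytil {d : ℕ} [mΩ : MeasurableSpace Ω] (P : Measure Ω) (F : Filtration ℝ mΩ)
    (r : ℝ) (δ : Fin d → ℝ) (a σm : Matrix (Fin d) (Fin d) ℝ) (B : Fin d → ℝ → Ω → ℝ)
    (ψ : (Fin d → ℝ) → ℝ) (x : Fin d → ℝ) (n : ℕ) (t : ℝ) (ω : Ω) : ℝ :=
  if t < n then
    Real.exp (-r * t) * VTfun P F r δ a σm B ψ ((n : ℝ) - t) (price r δ a σm B x t ω)
  else 0

/-- The norm `‖Z‖_{x,1} = sup { E|Z_τ| : τ a finite stopping time }` (in `ℝ≥0∞`). -/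
def distD [mΩ : MeasurableSpace Ω] (P : Measure Ω) (F : Filtration ℝ mΩ)
    (Z : ℝ → Ω → ℝ) : ℝ≥0∞ :=
  ⨆ τ : {τ : Ω → ℝ // IsStoppingTime F (fun ω => (τ ω : WithTop ℝ)) ∧ ∀ ω, 0 ≤ τ ω},
    ∫⁻ ω, ENNReal.ofReal |Z (τ.1 ω) ω| ∂P

section Aux

lemma isST_coe_iff {Ω : Type*} [mΩ : MeasurableSpace Ω] {F : Filtration ℝ mΩ} {τ : Ω → ℝ} :
    IsStoppingTime F (fun ω => (τ ω : WithTop ℝ)) ↔ ∀ u : ℝ, MeasurableSet[F u] {ω | τ ω ≤ u} := by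
  simp only [IsStoppingTime, WithTop.coe_le_coe]

lemma isST_min_coe {Ω : Type*} [mΩ : MeasurableSpace Ω] {F : Filtration ℝ mΩ} {a b : Ω → ℝ}
    (ha : IsStoppingTime F (fun ω => (a ω : WithTop ℝ)))
    (hb : IsStoppingTime F (fun ω => (b ω : WithTop ℝ))) :
    IsStoppingTime F (fun ω => ((min (a ω) (b ω) : ℝ) : WithTop ℝ)) := ha.min hb

lemma continuous_of_A1 {d : ℕ} {ψ : (Fin d → ℝ) → ℝ} {L : ℝ} (hψ : A1 ψ L) :
    Continuous ψ := by
  have key : ∀ x y : Fin d → ℝ, dist (ψ x) (ψ y) ≤ (|L| * Real.sqrt d) * dist x y := by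
    intro x y
    have h1 : |ψ x - ψ y| ≤ L * enorm (x - y) := hψ.lip x y
    have he0 : 0 ≤ enorm (x - y) := Real.sqrt_nonneg _
    have h2 : L * enorm (x - y) ≤ |L| * enorm (x - y) :=
      mul_le_mul_of_nonneg_right (le_abs_self L) he0
    have h3 : enorm (x - y) ≤ Real.sqrt d * dist x y := by
      have hsum : (∑ i, ((x - y) i) ^ 2) ≤ (d : ℝ) * ‖x - y‖ ^ 2 := by
        calc (∑ i, ((x - y) i) ^ 2) ≤ ∑ _i : Fin d, ‖x - y‖ ^ 2 := by
              refine Finset.sum_le_sum fun i _ => ?_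
              have := norm_le_pi_norm (x - y) i
              calc ((x - y) i) ^ 2 = ‖(x - y) i‖ ^ 2 := by
                    rw [Real.norm_eq_abs, sq_abs]
                _ ≤ ‖x - y‖ ^ 2 := by
                    exact pow_le_pow_left₀ (norm_nonneg _) this 2
          _ = (d : ℝ) * ‖x - y‖ ^ 2 := by simp [Finset.sum_const, nsmul_eq_mul]
      have : enorm (x - y) ≤ Real.sqrt ((d : ℝ) * ‖x - y‖ ^ 2) :=
        Real.sqrt_le_sqrt hsum
      calc enorm (x - y) ≤ Real.sqrt ((d : ℝ) * ‖x - y‖ ^ 2) := this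
        _ = Real.sqrt d * ‖x - y‖ := by
            rw [Real.sqrt_mul (Nat.cast_nonneg d), Real.sqrt_sq (norm_nonneg _)]
        _ = Real.sqrt d * dist x y := by rw [dist_eq_norm]
    calc dist (ψ x) (ψ y) = |ψ x - ψ y| := by rw [Real.dist_eq]
      _ ≤ |L| * enorm (x - y) := h1.trans h2
      _ ≤ |L| * (Real.sqrt d * dist x y) :=
          mul_le_mul_of_nonneg_left h3 (abs_nonneg L)
      _ = (|L| * Real.sqrt d) * dist x y := by ring
  exact (LipschitzWith.of_dist_le_mul (K := Real.toNNReal (|L| * Real.sqrt d))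
    (fun x y => by
      refine le_trans (key x y) ?_
      gcongr
      exact le_max_left _ _)).continuous

lemma measurable_psiMinus {d : ℕ} (r : ℝ) (δ : Fin d → ℝ) (a : Matrix (Fin d) (Fin d) ℝ)
    {ψ : (Fin d → ℝ) → ℝ} (hψ : Continuous ψ) : Measurable (PsiMinus r δ a ψ) := by
  have hfun : Measurable (PsiFun r δ a ψ) := by
    unfold PsiFun
    refine Measurable.ite ?_ ?_ measurable_const
    · exact (measurableSet_of_differentiableAt ℝ ψ).inter
        (measurableSet_of_differentiableAt ℝ (fderiv ℝ ψ))
    · refine Measurable.add (Measurable.add ?_ ?_) ?_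
      · exact (hψ.measurable.const_mul _)
      · refine Finset.measurable_sum _ fun i _ => ?_
        exact (((measurable_pi_apply i).const_mul _).mul
          (measurable_fderiv_apply_const ℝ ψ (Pi.single i 1)))
      · refine Measurable.const_mul ?_ _
        refine Finset.measurable_sum _ fun i _ => ?_
        refine Finset.measurable_sum _ fun j _ => ?_
        have hD2 : Measurable fun x : Fin d → ℝ =>
            fderiv ℝ (fderiv ℝ ψ) x (Pi.single i 1) (Pi.single j 1) :=
          (ContinuousLinearMap.measurable_apply (Pi.single j 1)).comp
            (measurable_fderiv_apply_const ℝ (fderiv ℝ ψ) (Pi.single i 1))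
        exact (((measurable_const.mul (measurable_pi_apply i)).mul
          (measurable_pi_apply j)).mul hD2)
    
  exact (hfun.neg.max measurable_const)

end Aux
section Aux2

variable {Ω : Type*} [mΩ : MeasurableSpace Ω] {F : Filtration ℝ mΩ} {P : Measure Ω}

lemma stronglyMeasurable_stoppedValue' {M : ℝ → Ω → ℝ} (hM : Adapted F M)
    (hMc : ∀ ω, Continuous fun t => M t ω) {σ : Ω → ℝ} (hσ : Measurable σ) :
    StronglyMeasurable fun ω => M (σ ω) ω := by
  have huncurry : StronglyMeasurable (Function.uncurry M) :=
    stronglyMeasurable_uncurry_of_continuous_of_stronglyMeasurable hMc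
      (fun t => ((hM t).mono (F.le t) le_rfl).stronglyMeasurable)
  exact huncurry.comp_measurable (hσ.prodMk measurable_id)

lemma ClassD.aesm {Y : ℝ → Ω → ℝ} (h : ClassD P F Y) {σ : Ω → ℝ}
    (hσ : IsStoppingTime F (fun ω => (σ ω : WithTop ℝ))) (hσ0 : ∀ ω, 0 ≤ σ ω) :
    AEStronglyMeasurable (fun ω => Y (σ ω) ω) P := h.1 ⟨σ, hσ, hσ0⟩

lemma ClassD.memLp {Y : ℝ → Ω → ℝ} (h : ClassD P F Y) {σ : Ω → ℝ}
    (hσ : IsStoppingTime F (fun ω => (σ ω : WithTop ℝ))) (hσ0 : ∀ ω, 0 ≤ σ ω) :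
    MemLp (fun ω => Y (σ ω) ω) 1 P := by
  obtain ⟨C, hC⟩ := h.2.2
  exact ⟨h.aesm hσ hσ0, lt_of_le_of_lt (hC ⟨σ, hσ, hσ0⟩) ENNReal.coe_lt_top⟩

lemma ClassD.integrable_stopped {Y : ℝ → Ω → ℝ} (h : ClassD P F Y) {σ : Ω → ℝ}
    (hσ : IsStoppingTime F (fun ω => (σ ω : WithTop ℝ))) (hσ0 : ∀ ω, 0 ≤ σ ω) :
    Integrable (fun ω => Y (σ ω) ω) P :=
  memLp_one_iff_integrable.mp (h.memLp hσ hσ0)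

lemma ClassD.unifIntegrable {Y : ℝ → Ω → ℝ} (h : ClassD P F Y) {σ : ℕ → Ω → ℝ}
    (hσ : ∀ n, IsStoppingTime F (fun ω => (σ n ω : WithTop ℝ))) (hσ0 : ∀ n ω, 0 ≤ σ n ω) :
    UnifIntegrable (fun n ω => Y (σ n ω) ω) 1 P := by
  intro ε hε
  obtain ⟨δ, hδ, hh⟩ := h.2.1 hε
  exact ⟨δ, hδ, fun n s hs hμ => hh ⟨σ n, hσ n, hσ0 n⟩ s hs hμ⟩

lemma unifIntegrable_of_abs_le {f u v : ℕ → Ω → ℝ}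
    (hu : UnifIntegrable u 1 P) (hum : ∀ n, AEStronglyMeasurable (u n) P)
    (hv : UnifIntegrable v 1 P) (hvm : ∀ n, AEStronglyMeasurable (v n) P)
    (hb : ∀ n, ∀ᵐ ω ∂P, |f n ω| ≤ |u n ω| + |v n ω|) :
    UnifIntegrable f 1 P := by
  intro ε hε
  obtain ⟨δ₁, hδ₁, h₁⟩ := hu (half_pos hε)
  obtain ⟨δ₂, hδ₂, h₂⟩ := hv (half_pos hε)
  refine ⟨min δ₁ δ₂, lt_min hδ₁ hδ₂, fun n s hs hμ => ?_⟩
  have e1 := h₁ n s hs (hμ.trans (ENNReal.ofReal_le_ofReal (min_le_left _ _)))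
  have e2 := h₂ n s hs (hμ.trans (ENNReal.ofReal_le_ofReal (min_le_right _ _)))
  have step1 : eLpNorm (s.indicator (f n)) 1 P ≤
      eLpNorm (fun ω => ‖s.indicator (u n) ω‖ + ‖s.indicator (v n) ω‖) 1 P := by
    refine eLpNorm_mono_ae ?_
    filter_upwards [hb n] with ω hω
    by_cases hωs : ω ∈ s
    · simp only [Set.indicator_of_mem hωs]
      calc ‖f n ω‖ = |f n ω| := Real.norm_eq_abs _
        _ ≤ |u n ω| + |v n ω| := hω
        _ = ‖u n ω‖ + ‖v n ω‖ := by rw [Real.norm_eq_abs, Real.norm_eq_abs]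
        _ ≤ ‖‖u n ω‖ + ‖v n ω‖‖ := le_abs_self _
    · simp [Set.indicator_of_notMem hωs]
  have step2 : eLpNorm (fun ω => ‖s.indicator (u n) ω‖ + ‖s.indicator (v n) ω‖) 1 P ≤
      eLpNorm (s.indicator (u n)) 1 P + eLpNorm (s.indicator (v n)) 1 P := by
    have h := eLpNorm_add_le (((hum n).indicator hs).norm) (((hvm n).indicator hs).norm)
      (le_refl (1 : ℝ≥0∞))
    calc eLpNorm (fun ω => ‖s.indicator (u n) ω‖ + ‖s.indicator (v n) ω‖) 1 P
        ≤ eLpNorm (fun ω => ‖s.indicator (u n) ω‖) 1 P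
          + eLpNorm (fun ω => ‖s.indicator (v n) ω‖) 1 P := h
      _ = _ := by rw [eLpNorm_norm, eLpNorm_norm]
  calc eLpNorm (s.indicator (f n)) 1 P
      ≤ eLpNorm (s.indicator (u n)) 1 P + eLpNorm (s.indicator (v n)) 1 P := step1.trans step2
    _ ≤ ENNReal.ofReal (ε / 2) + ENNReal.ofReal (ε / 2) := add_le_add e1 e2
    _ = ENNReal.ofReal ε := by
        rw [← ENNReal.ofReal_add (by positivity) (by positivity), add_halves]

lemma tendsto_integral_of_ae_tendsto [IsFiniteMeasure P] {f : ℕ → Ω → ℝ} {g : Ω → ℝ}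
    (hfm : ∀ n, AEStronglyMeasurable (f n) P) (hfi : ∀ n, Integrable (f n) P)
    (hg : MemLp g 1 P) (hui : UnifIntegrable f 1 P)
    (hae : ∀ᵐ ω ∂P, Tendsto (fun n => f n ω) atTop (nhds (g ω))) :
    Tendsto (fun n => ∫ ω, f n ω ∂P) atTop (nhds (∫ ω, g ω ∂P)) := by
  have hLp := tendsto_Lp_finite_of_tendsto_ae (μ := P) (p := 1) le_rfl ENNReal.one_ne_top
    hfm hg hui hae
  refine tendsto_integral_of_L1 g (memLp_one_iff_integrable.mp hg).1
    (Eventually.of_forall hfi) ?_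
  have : ∀ n, eLpNorm (f n - g) 1 P = ∫⁻ ω, ‖f n ω - g ω‖ₑ ∂P := by
    intro n
    rw [eLpNorm_one_eq_lintegral_enorm]
    simp [Pi.sub_apply]
  simpa only [this] using hLp

lemma integral_stoppedValue_finite_range [IsFiniteMeasure P] {f : ℝ → Ω → ℝ}
    (hf : Martingale f F P) {η : Ω → ℝ} (hη : IsStoppingTime F (fun ω => (η ω : WithTop ℝ)))
    {S : Finset ℝ} (hS : ∀ ω, η ω ∈ S) {T : ℝ} (hT : ∀ q ∈ S, q ≤ T) :
    ∫ ω, f (η ω) ω ∂P = ∫ ω, f T ω ∂P := by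
  have hcnt : (Set.range (fun ω => (η ω : WithTop ℝ))).Countable :=
    (S.countable_toSet.image _).mono (by rintro _ ⟨ω, rfl⟩; exact ⟨η ω, hS ω, rfl⟩)
  have hq : ∀ q : ℝ, MeasurableSet[F q] {ω | η ω = q} := fun q => by
    simpa using hη.measurableSet_eq_of_countable_range hcnt q
  have hqm : ∀ q : ℝ, MeasurableSet {ω | η ω = q} := fun q => F.le q _ (hq q)
  have hsum : ∀ (G : ℝ → Ω → ℝ) (ω : Ω),
      (∑ q ∈ S, Set.indicator {ω' | η ω' = q} (G q) ω) = G (η ω) ω := by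
    intro G ω
    rw [Finset.sum_eq_single (η ω)]
    · exact Set.indicator_of_mem (by simp : ω ∈ {ω' | η ω' = η ω}) (G (η ω))
    · intro q _ hne
      exact Set.indicator_of_notMem (fun h => hne (by simpa using h.symm)) _
    · intro h; exact absurd (hS ω) h
  calc ∫ ω, f (η ω) ω ∂P
      = ∫ ω, ∑ q ∈ S, Set.indicator {ω' | η ω' = q} (f q) ω ∂P := by
        refine integral_congr_ae (Eventually.of_forall fun ω => ?_)
        simpa using (hsum f ω).symm
    _ = ∑ q ∈ S, ∫ ω, Set.indicator {ω' | η ω' = q} (f q) ω ∂P :=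
        integral_finset_sum _ fun q _ => (hf.integrable q).indicator (hqm q)
    _ = ∑ q ∈ S, ∫ ω, Set.indicator {ω' | η ω' = q} (f T) ω ∂P := by
        refine Finset.sum_congr rfl fun q hqS => ?_
        rw [integral_indicator (hqm q), integral_indicator (hqm q)]
        exact hf.setIntegral_eq (hT q hqS) (hq q)
    _ = ∫ ω, ∑ q ∈ S, Set.indicator {ω' | η ω' = q} (f T) ω ∂P :=
        (integral_finset_sum _ fun q _ => (hf.integrable T).indicator (hqm q)).symm
    _ = ∫ ω, f T ω ∂P := by
        refine integral_congr_ae (Eventually.of_forall fun ω => ?_)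
        simpa using hsum (fun _ => f T) ω

end Aux2
section Dyadic

variable {Ω : Type*} [mΩ : MeasurableSpace Ω] {F : Filtration ℝ mΩ}

/-- Dyadic upper approximation of a random time. -/
def dyad (t : ℝ) (k : ℕ) (ρ : Ω → ℝ) (ω : Ω) : ℝ :=
  t + (⌈(ρ ω - t) * 2 ^ k⌉ : ℤ) / 2 ^ k

lemma le_dyad {t : ℝ} {k : ℕ} {ρ : Ω → ℝ} (ω : Ω) : ρ ω ≤ dyad t k ρ ω := by
  have h2 : (0:ℝ) < 2 ^ k := by positivity
  rw [dyad, ← sub_le_iff_le_add', le_div_iff₀ h2]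
  exact Int.le_ceil _

lemma dyad_le_add {t : ℝ} {k : ℕ} {ρ : Ω → ℝ} (ω : Ω) :
    dyad t k ρ ω ≤ ρ ω + 1 / 2 ^ k := by
  have h2 : (0:ℝ) < 2 ^ k := by positivity
  rw [dyad]
  calc t + (⌈(ρ ω - t) * 2 ^ k⌉ : ℤ) / 2 ^ k
      ≤ t + ((ρ ω - t) * 2 ^ k + 1) / 2 ^ k := by
        gcongr
        exact (Int.ceil_lt_add_one _).le
    _ = ρ ω + 1 / 2 ^ k := by
        rw [add_div, mul_div_cancel_right₀ _ h2.ne']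
        ring

lemma dyad_isStoppingTime {t : ℝ} {k : ℕ} {ρ : Ω → ℝ} (hρ : IsStoppingTime F (fun ω => (ρ ω : WithTop ℝ))) :
    IsStoppingTime F (fun ω => (dyad t k ρ ω : WithTop ℝ)) := by
  rw [isST_coe_iff] at hρ ⊢
  intro u
  have h2 : (0:ℝ) < 2 ^ k := by positivity
  have key : {ω | dyad t k ρ ω ≤ u}
      = {ω | ρ ω ≤ t + (⌊(u - t) * 2 ^ k⌋ : ℤ) / 2 ^ k} := by
    ext ω
    simp only [dyad, Set.mem_setOf_eq]
    rw [← le_sub_iff_add_le', div_le_iff₀ h2, ← Int.le_floor, Int.ceil_le,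
      ← le_div_iff₀ h2, sub_le_iff_le_add']
  rw [show {ω | dyad t k ρ ω ≤ u} = _ from key]
  have hvu : t + (⌊(u - t) * 2 ^ k⌋ : ℤ) / 2 ^ k ≤ u := by
    rw [← le_sub_iff_add_le', div_le_iff₀ h2]
    exact Int.floor_le _
  exact F.mono hvu _ (hρ _)

lemma dyad_mem_image {t T : ℝ} {k : ℕ} {ρ : Ω → ℝ} (hρt : ∀ ω, t ≤ ρ ω)
    (hρT : ∀ ω, ρ ω ≤ T) (ω : Ω) :
    dyad t k ρ ω ∈ (Finset.Icc (0:ℤ) ⌈(T - t) * 2 ^ k⌉).image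
      (fun j : ℤ => t + (j : ℝ) / 2 ^ k) := by
  have h2 : (0:ℝ) < 2 ^ k := by positivity
  refine Finset.mem_image.mpr ⟨⌈(ρ ω - t) * 2 ^ k⌉, ?_, rfl⟩
  refine Finset.mem_Icc.mpr ⟨?_, ?_⟩
  · exact Int.ceil_nonneg (mul_nonneg (sub_nonneg.mpr (hρt ω)) h2.le)
  · exact Int.ceil_le_ceil (mul_le_mul_of_nonneg_right (sub_le_sub_right (hρT ω) t) h2.le)

lemma dyad_measurable {t : ℝ} {k : ℕ} {ρ : Ω → ℝ} (hρm : Measurable ρ) :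
    Measurable (dyad t k ρ) := by
  have : Measurable fun ω => (⌈(ρ ω - t) * 2 ^ k⌉ : ℤ) :=
    ((hρm.sub measurable_const).mul measurable_const).ceil
  have h2 : Measurable fun ω => ((⌈(ρ ω - t) * 2 ^ k⌉ : ℤ) : ℝ) :=
    Measurable.comp (g := fun z : ℤ => (z : ℝ)) (fun s _ => trivial) this
  exact measurable_const.add (h2.div_const _)

lemma dyad_tendsto {t : ℝ} {ρ : Ω → ℝ} (hρt : ∀ ω, t ≤ ρ ω) (ω : Ω) :
    Tendsto (fun k => dyad t k ρ ω) atTop (nhds (ρ ω)) := by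
  have h0 : Tendsto (fun k : ℕ => ((1:ℝ)/2) ^ k) atTop (nhds 0) :=
    tendsto_pow_atTop_nhds_zero_of_lt_one (by norm_num) (by norm_num)
  have h1 : Tendsto (fun k : ℕ => ρ ω + 1 / 2 ^ k) atTop (nhds (ρ ω)) := by
    have h2 := ((tendsto_const_nhds :
      Tendsto (fun _ : ℕ => ρ ω) atTop (nhds (ρ ω))).add h0)
    simpa [one_div_pow] using h2
  exact tendsto_of_tendsto_of_tendsto_of_le_of_le tendsto_const_nhds h1
    (fun k => le_dyad ω) (fun k => dyad_le_add ω)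

end Dyadic
section StoppedM

variable {Ω : Type*} [mΩ : MeasurableSpace Ω] {F : Filtration ℝ mΩ} {P : Measure Ω}

lemma tendsto_integral_stoppedM [IsProbabilityMeasure P] {Y M : ℝ → Ω → ℝ} {b : Ω → ℝ}
    (hD : ClassD P F Y) (hMa : Adapted F M) (hMc : ∀ ω, Continuous fun t => M t ω)
    (hb : Integrable b P)
    (hdom : ∀ᵐ ω ∂P, ∀ v : ℝ, 0 ≤ v → |M v ω| ≤ b ω + |Y v ω|)
    {σs : ℕ → Ω → ℝ} {σ : Ω → ℝ}
    (hσs : ∀ n, IsStoppingTime F (fun ω => (σs n ω : WithTop ℝ))) (hσs0 : ∀ n ω, 0 ≤ σs n ω)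
    (hσsm : ∀ n, Measurable (σs n))
    (hσ : IsStoppingTime F (fun ω => (σ ω : WithTop ℝ))) (hσ0 : ∀ ω, 0 ≤ σ ω) (hσm : Measurable σ)
    (hconv : ∀ᵐ ω ∂P, Tendsto (fun n => σs n ω) atTop (nhds (σ ω))) :
    Tendsto (fun n => ∫ ω, M (σs n ω) ω ∂P) atTop (nhds (∫ ω, M (σ ω) ω ∂P)) := by
  have hAESM : ∀ n, AEStronglyMeasurable (fun ω => M (σs n ω) ω) P := fun n =>
    (stronglyMeasurable_stoppedValue' hMa hMc (hσsm n)).aestronglyMeasurable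
  have hAESMσ : AEStronglyMeasurable (fun ω => M (σ ω) ω) P :=
    (stronglyMeasurable_stoppedValue' hMa hMc hσm).aestronglyMeasurable
  have hYint : ∀ n, Integrable (fun ω => Y (σs n ω) ω) P := fun n =>
    hD.integrable_stopped (hσs n) (hσs0 n)
  have habs : ∀ (θ : Ω → ℝ), (∀ ω, 0 ≤ θ ω) → ∀ᵐ ω ∂P,
      |M (θ ω) ω| ≤ |b ω| + |Y (θ ω) ω| := by
    intro θ hθ0
    filter_upwards [hdom] with ω hω
    exact (hω (θ ω) (hθ0 ω)).trans (by gcongr; exact le_abs_self _)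
  have hint : ∀ n, Integrable (fun ω => M (σs n ω) ω) P := by
    intro n
    refine Integrable.mono' (hb.abs.add (hYint n).abs) (hAESM n) ?_
    filter_upwards [habs (σs n) (hσs0 n)] with ω hω
    rw [Real.norm_eq_abs]
    exact hω
  have hglimit : Integrable (fun ω => M (σ ω) ω) P := by
    refine Integrable.mono' (hb.abs.add (hD.integrable_stopped hσ hσ0).abs) hAESMσ ?_
    filter_upwards [habs σ hσ0] with ω hω
    rw [Real.norm_eq_abs]
    exact hω
  have hui : UnifIntegrable (fun n ω => M (σs n ω) ω) 1 P := by
    refine unifIntegrable_of_abs_le (u := fun n ω => Y (σs n ω) ω) (v := fun _ => b)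
      (hD.unifIntegrable hσs hσs0) (fun n => hD.aesm (hσs n) (hσs0 n))
      (unifIntegrable_const le_rfl ENNReal.one_ne_top (memLp_one_iff_integrable.mpr hb))
      (fun _ => hb.1) ?_
    intro n
    filter_upwards [habs (σs n) (hσs0 n)] with ω hω
    calc |M (σs n ω) ω| ≤ |b ω| + |Y (σs n ω) ω| := hω
      _ = |Y (σs n ω) ω| + |b ω| := add_comm _ _
  have htd : ∀ᵐ ω ∂P, Tendsto (fun n => M (σs n ω) ω) atTop (nhds (M (σ ω) ω)) := by
    filter_upwards [hconv] with ω hω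
    exact (((hMc ω).tendsto (σ ω)).comp hω)
  exact tendsto_integral_of_ae_tendsto hAESM hint (memLp_one_iff_integrable.mpr hglimit) hui htd

lemma measurable_of_isStoppingTime {τ : Ω → ℝ} (hτ : IsStoppingTime F (fun ω => (τ ω : WithTop ℝ))) :
    Measurable τ := by
  rw [isST_coe_iff] at hτ
  refine measurable_of_Iic fun u => ?_
  have : τ ⁻¹' Set.Iic u = {ω | τ ω ≤ u} := rfl
  rw [this]
  exact F.le u _ (hτ u)

lemma integral_stoppedM_eq [IsProbabilityMeasure P] {Y M : ℝ → Ω → ℝ} {b : Ω → ℝ}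
    (hD : ClassD P F Y) (hMa : Adapted F M) (hMc : ∀ ω, Continuous fun t => M t ω)
    (hloc : IsLocalMartingale P F M) (hb : Integrable b P)
    (hdom : ∀ᵐ ω ∂P, ∀ v : ℝ, 0 ≤ v → |M v ω| ≤ b ω + |Y v ω|)
    {t T : ℝ} (ht : 0 ≤ t) (htT : t ≤ T) {ρ : Ω → ℝ} (hρ : IsStoppingTime F (fun ω => (ρ ω : WithTop ℝ)))
    (hρt : ∀ ω, t ≤ ρ ω) (hρT : ∀ ω, ρ ω ≤ T) :
    ∫ ω, M (ρ ω) ω ∂P = ∫ ω, M t ω ∂P := by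
  obtain ⟨τ, hτst, hτ0, hτmono, hτtop, hτmart⟩ := hloc
  have hρm : Measurable ρ := measurable_of_isStoppingTime hρ
  have hτm : ∀ n, Measurable (τ n) := fun n => measurable_of_isStoppingTime (hτst n)
  have h2 : ∀ k : ℕ, (0:ℝ) < 2 ^ k := fun k => by positivity
  -- facts about the dyadic approximations
  have hρk_st : ∀ k, IsStoppingTime F (fun ω => (dyad t k ρ ω : WithTop ℝ)) := fun k => dyad_isStoppingTime hρ
  have hρk_ge : ∀ k ω, t ≤ dyad t k ρ ω := fun k ω => (hρt ω).trans (le_dyad ω)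
  have hρk_0 : ∀ k ω, 0 ≤ dyad t k ρ ω := fun k ω => ht.trans (hρk_ge k ω)
  have hρk_le : ∀ k ω, dyad t k ρ ω ≤ T + 1 := by
    intro k ω
    refine (dyad_le_add ω).trans (add_le_add (hρT ω) ?_)
    rw [div_le_one (h2 k)]
    exact one_le_pow₀ (by norm_num)
  have hρk_m : ∀ k, Measurable (dyad t k ρ) := fun k => dyad_measurable hρm
  -- Step A : equality at discrete level
  have stepA : ∀ n k, ∫ ω, M (min (dyad t k ρ ω) (τ n ω)) ω ∂P
      = ∫ ω, M (min t (τ n ω)) ω ∂P := by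
    intro n k
    have hmart := hτmart n
    have e1 : ∫ ω, M (min (dyad t k ρ ω) (τ n ω)) ω ∂P
        = ∫ ω, M (min (T + 1) (τ n ω)) ω ∂P := by
      refine integral_stoppedValue_finite_range hmart (hρk_st k)
        (S := (Finset.Icc (0:ℤ) ⌈(T - t) * 2 ^ k⌉).image (fun j : ℤ => t + (j : ℝ) / 2 ^ k))
        (fun ω => dyad_mem_image hρt hρT ω) (T := T + 1) ?_
      intro q hq
      obtain ⟨j, hj, rfl⟩ := Finset.mem_image.mp hq
      obtain ⟨hj0, hjle⟩ := Finset.mem_Icc.mp hj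
      have hcast : (j : ℝ) ≤ (⌈(T - t) * 2 ^ k⌉ : ℤ) := by exact_mod_cast hjle
      have : (⌈(T - t) * 2 ^ k⌉ : ℝ) ≤ (T - t) * 2 ^ k + 1 := (Int.ceil_lt_add_one _).le
      calc t + (j : ℝ) / 2 ^ k ≤ t + ((T - t) * 2 ^ k + 1) / 2 ^ k := by
            gcongr
            exact hcast.trans this
        _ = T + 1 / 2 ^ k := by
            rw [add_div, mul_div_cancel_right₀ _ (h2 k).ne']
            ring
        _ ≤ T + 1 := by
            gcongr
            rw [div_le_one (h2 k)]
            exact one_le_pow₀ (by norm_num)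
    have e2 : ∫ ω, M (min t (τ n ω)) ω ∂P = ∫ ω, M (min (T + 1) (τ n ω)) ω ∂P := by
      refine integral_stoppedValue_finite_range hmart (isStoppingTime_const F t)
        (S := {t}) (fun ω => Finset.mem_singleton_self t) (T := T + 1) ?_
      intro q hq
      rw [Finset.mem_singleton] at hq
      subst hq
      linarith
    rw [e1, e2]
  -- Step B : limit over the localizing sequence
  have stepB : ∀ k, ∫ ω, M (dyad t k ρ ω) ω ∂P = ∫ ω, M t ω ∂P := by
    intro k
    have hBl : Tendsto (fun n => ∫ ω, M (min (dyad t k ρ ω) (τ n ω)) ω ∂P) atTop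
        (nhds (∫ ω, M (dyad t k ρ ω) ω ∂P)) := by
      refine tendsto_integral_stoppedM hD hMa hMc hb hdom
        (σs := fun n ω => min (dyad t k ρ ω) (τ n ω))
        (fun n => isST_min_coe (hρk_st k) (hτst n)) (fun n ω => le_min (hρk_0 k ω) (hτ0 n ω))
        (fun n => (hρk_m k).min (hτm n)) (hρk_st k) (hρk_0 k) (hρk_m k) ?_
      refine Eventually.of_forall fun ω => ?_
      have hev : ∀ᶠ n in atTop, dyad t k ρ ω = min (dyad t k ρ ω) (τ n ω) := by
        filter_upwards [(hτtop ω).eventually_ge_atTop (dyad t k ρ ω)] with n hn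
        exact (min_eq_left hn).symm
      exact Tendsto.congr' hev tendsto_const_nhds
    have hBr : Tendsto (fun n => ∫ ω, M (min t (τ n ω)) ω ∂P) atTop
        (nhds (∫ ω, M t ω ∂P)) := by
      have h := tendsto_integral_stoppedM hD hMa hMc hb hdom
        (σs := fun n ω => min t (τ n ω)) (σ := fun _ => t)
        (fun n => isST_min_coe (isStoppingTime_const F t) (hτst n))
        (fun n ω => le_min ht (hτ0 n ω))
        (fun n => measurable_const.min (hτm n)) (isStoppingTime_const F t)
        (fun _ => ht) measurable_const ?_
      · exact h
      refine Eventually.of_forall fun ω => ?_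
      have hev : ∀ᶠ n in atTop, t = min t (τ n ω) := by
        filter_upwards [(hτtop ω).eventually_ge_atTop t] with n hn
        exact (min_eq_left hn).symm
      exact Tendsto.congr' hev tendsto_const_nhds
    have heq : (fun n => ∫ ω, M (min (dyad t k ρ ω) (τ n ω)) ω ∂P)
        = fun n => ∫ ω, M (min t (τ n ω)) ω ∂P := funext fun n => stepA n k
    rw [heq] at hBl
    exact tendsto_nhds_unique hBl hBr
  -- Step C : limit of the dyadic approximations
  have hCl : Tendsto (fun k => ∫ ω, M (dyad t k ρ ω) ω ∂P) atTop
      (nhds (∫ ω, M (ρ ω) ω ∂P)) :=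
    tendsto_integral_stoppedM hD hMa hMc hb hdom hρk_st hρk_0 hρk_m hρ
      (fun ω => ht.trans (hρt ω)) hρm (Eventually.of_forall (dyad_tendsto hρt))
  have hconst : (fun k : ℕ => ∫ ω, M (dyad t k ρ ω) ω ∂P)
      = fun _ => ∫ ω, M t ω ∂P := funext stepB
  rw [hconst] at hCl
  exact (tendsto_nhds_unique tendsto_const_nhds hCl).symm

end StoppedM
section Hitting

variable {Ω : Type*} [mΩ : MeasurableSpace Ω] {F : Filtration ℝ mΩ}

lemma hitting_measurable_aux {Y1 Y2 : ℝ → Ω → ℝ}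
    (h1c : ∀ ω, Continuous fun s => Y1 s ω) (h2c : ∀ ω, Continuous fun s => Y2 s ω)
    (ha1 : Adapted F Y1) (ha2 : Adapted F Y2) {t u : ℝ} (htu : t ≤ u) :
    MeasurableSet[F u] {ω | ∃ s ∈ Set.Icc t u, Y1 s ω ≤ Y2 s ω} := by
  have hkey : {ω | ∃ s ∈ Set.Icc t u, Y1 s ω ≤ Y2 s ω}
      = ⋂ n : ℕ, ({ω | Y1 t ω ≤ Y2 t ω + 1/(n+1)} ∪ {ω | Y1 u ω ≤ Y2 u ω + 1/(n+1)}
        ∪ ⋃ q : ℚ, {ω | (t ≤ (q:ℝ) ∧ (q:ℝ) ≤ u) ∧ Y1 q ω ≤ Y2 q ω + 1/(n+1)}) := by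
    ext ω
    simp only [Set.mem_setOf_eq, Set.mem_iInter, Set.mem_union, Set.mem_iUnion]
    constructor
    · rintro ⟨s, hs, hle⟩ n
      have hpos : (0:ℝ) < 1/(n+1) := by positivity
      rcases eq_or_lt_of_le hs.1 with hst | hst
      · exact Or.inl (Or.inl (by rw [← hst] at hle; linarith))
      rcases eq_or_lt_of_le hs.2 with hsu | hsu
      · exact Or.inl (Or.inr (by rw [hsu] at hle; linarith))
      · -- t < s < u : find a rational
        have hcont : ContinuousAt (fun s' => Y1 s' ω - Y2 s' ω) s :=
          ((h1c ω).sub (h2c ω)).continuousAt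
        obtain ⟨d, hd, hball⟩ := Metric.continuousAt_iff.mp hcont (1/(n+1)) hpos
        have hlt : max t (s - d) < s := by
          rcases max_cases t (s - d) with ⟨heq, _⟩ | ⟨heq, _⟩ <;> rw [heq]
          · exact hst
          · linarith
        obtain ⟨q, hq1, hq2⟩ := exists_rat_btwn hlt
        refine Or.inr ⟨q, ⟨?_, ?_⟩, ?_⟩
        · exact le_of_lt (lt_of_le_of_lt (le_max_left _ _) hq1)
        · exact le_of_lt (hq2.trans hsu)
        · have hdist : dist (q:ℝ) s < d := by
            rw [Real.dist_eq, abs_of_nonpos (by linarith)]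
            have := lt_of_le_of_lt (le_max_right t (s - d)) hq1
            linarith
          have := hball hdist
          rw [Real.dist_eq] at this
          have h2' : Y1 (q:ℝ) ω - Y2 (q:ℝ) ω - (Y1 s ω - Y2 s ω) < 1/(n+1) :=
            lt_of_le_of_lt (le_abs_self _) this
          linarith
    · intro h
      have hch : ∀ n : ℕ, ∃ s, s ∈ Set.Icc t u ∧ Y1 s ω - Y2 s ω ≤ 1/(n+1) := by
        intro n
        rcases h n with (hc | hc) | ⟨q, ⟨hq1, hq2⟩, hq3⟩
        · exact ⟨t, ⟨le_refl t, htu⟩, by linarith⟩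
        · exact ⟨u, ⟨htu, le_refl u⟩, by linarith⟩
        · exact ⟨(q:ℝ), ⟨hq1, hq2⟩, by linarith⟩
      choose seq hmem hle using hch
      obtain ⟨x, hx, φ, hφ, hconv⟩ := (isCompact_Icc (a := t) (b := u)).tendsto_subseq hmem
      have hGx : Tendsto (fun k => Y1 (seq (φ k)) ω - Y2 (seq (φ k)) ω) atTop
          (nhds (Y1 x ω - Y2 x ω)) :=
        (((h1c ω).sub (h2c ω)).tendsto x).comp hconv
      have h0 : Tendsto (fun k => 1/((φ k : ℝ)+1)) atTop (nhds 0) :=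
        tendsto_one_div_add_atTop_nhds_zero_nat.comp hφ.tendsto_atTop
      have hfin : Y1 x ω - Y2 x ω ≤ 0 :=
        le_of_tendsto_of_tendsto' hGx h0 (fun k => hle (φ k))
      exact ⟨x, hx, by linarith⟩
  rw [hkey]
  refine MeasurableSet.iInter fun n => ?_
  refine MeasurableSet.union (MeasurableSet.union ?_ ?_) ?_
  · have m1 : Measurable[F u] (fun ω => Y1 t ω) :=
      (ha1 t).mono (F.mono htu) le_rfl
    have m2 : Measurable[F u] (fun ω => Y2 t ω + 1/(n+1)) :=
      ((ha2 t).mono (F.mono htu) le_rfl).add measurable_const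
    exact measurableSet_le m1 m2
  · exact measurableSet_le (ha1 u)
      ((ha2 u).add measurable_const)
  · refine MeasurableSet.iUnion fun q => ?_
    by_cases hq : t ≤ (q:ℝ) ∧ (q:ℝ) ≤ u
    · have : {ω | (t ≤ (q:ℝ) ∧ (q:ℝ) ≤ u) ∧ Y1 q ω ≤ Y2 q ω + 1/(n+1)}
          = {ω | Y1 (q:ℝ) ω ≤ Y2 (q:ℝ) ω + 1/(n+1)} := by
        ext ω; simp [hq]
      rw [this]
      exact measurableSet_le ((ha1 q).mono (F.mono hq.2) le_rfl)
        (((ha2 q).mono (F.mono hq.2) le_rfl).add measurable_const)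
    · have : {ω | (t ≤ (q:ℝ) ∧ (q:ℝ) ≤ u) ∧ Y1 (q:ℝ) ω ≤ Y2 (q:ℝ) ω + 1/(n+1)}
          = (∅ : Set Ω) := by
        ext ω; simp only [Set.mem_setOf_eq, Set.mem_empty_iff_false, iff_false]
        rintro ⟨hq', _⟩; exact hq hq'
      rw [this]
      exact @MeasurableSet.empty _ (F u)

end Hitting
section PathFacts

variable {Ω : Type*} [mΩ : MeasurableSpace Ω] {F : Filtration ℝ mΩ} {P : Measure Ω}

/-- The (discounted) generator of the BSDE along the path. -/
def gen {d : ℕ} (r : ℝ) (δ : Fin d → ℝ) (a : Matrix (Fin d) (Fin d) ℝ)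
    (ψ : (Fin d → ℝ) → ℝ) (X : ℝ → Ω → (Fin d → ℝ)) (Y : ℝ → Ω → ℝ)
    (s : ℝ) (ω : Ω) : ℝ :=
  Real.exp (-r * s) * Phi r δ a ψ (X s ω) (Real.exp (r * s) * Y s ω)

/-- Total mass of the dominating integrand. -/
def CC {d : ℕ} (r : ℝ) (δ : Fin d → ℝ) (a : Matrix (Fin d) (Fin d) ℝ)
    (ψ : (Fin d → ℝ) → ℝ) (X : ℝ → Ω → (Fin d → ℝ)) (ω : Ω) : ℝ≥0∞ :=
  ∫⁻ s in Set.Ioi (0:ℝ), ENNReal.ofReal (Real.exp (-r * s) * PsiMinus r δ a ψ (X s ω)) ∂volume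

lemma psiMinus_nonneg {d : ℕ} (r : ℝ) (δ : Fin d → ℝ) (a : Matrix (Fin d) (Fin d) ℝ)
    (ψ : (Fin d → ℝ) → ℝ) (x : Fin d → ℝ) : 0 ≤ PsiMinus r δ a ψ x := le_max_right _ _

lemma phi_nonneg {d : ℕ} (r : ℝ) (δ : Fin d → ℝ) (a : Matrix (Fin d) (Fin d) ℝ)
    (ψ : (Fin d → ℝ) → ℝ) (x : Fin d → ℝ) (y : ℝ) : 0 ≤ Phi r δ a ψ x y := by
  unfold Phi
  refine mul_nonneg (psiMinus_nonneg r δ a ψ x) ?_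
  split <;> norm_num

lemma phi_le {d : ℕ} (r : ℝ) (δ : Fin d → ℝ) (a : Matrix (Fin d) (Fin d) ℝ)
    (ψ : (Fin d → ℝ) → ℝ) (x : Fin d → ℝ) (y : ℝ) :
    Phi r δ a ψ x y ≤ PsiMinus r δ a ψ x := by
  unfold Phi
  have h := psiMinus_nonneg r δ a ψ x
  split <;> simp [h]

lemma gen_nonneg {d : ℕ} {r : ℝ} {δ : Fin d → ℝ} {a : Matrix (Fin d) (Fin d) ℝ}
    {ψ : (Fin d → ℝ) → ℝ} {X : ℝ → Ω → (Fin d → ℝ)} {Y : ℝ → Ω → ℝ} (s : ℝ) (ω : Ω) :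
    0 ≤ gen r δ a ψ X Y s ω :=
  mul_nonneg (Real.exp_nonneg _) (phi_nonneg _ _ _ _ _ _)

lemma gen_le {d : ℕ} {r : ℝ} {δ : Fin d → ℝ} {a : Matrix (Fin d) (Fin d) ℝ}
    {ψ : (Fin d → ℝ) → ℝ} {X : ℝ → Ω → (Fin d → ℝ)} {Y : ℝ → Ω → ℝ} (s : ℝ) (ω : Ω) :
    gen r δ a ψ X Y s ω ≤ Real.exp (-r * s) * PsiMinus r δ a ψ (X s ω) :=
  mul_le_mul_of_nonneg_left (phi_le _ _ _ _ _ _) (Real.exp_nonneg _)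

lemma abs_intervalIntegral_gen_le {d : ℕ} {r : ℝ} {δ : Fin d → ℝ}
    {a : Matrix (Fin d) (Fin d) ℝ} {ψ : (Fin d → ℝ) → ℝ} {X : ℝ → Ω → (Fin d → ℝ)}
    {Y : ℝ → Ω → ℝ} {ω : Ω} (hCf : CC r δ a ψ X ω ≠ ⊤) {u v : ℝ} (hu : 0 ≤ u)
    (huv : u ≤ v) :
    |∫ s in u..v, gen r δ a ψ X Y s ω| ≤ (CC r δ a ψ X ω).toReal := by
  rw [intervalIntegral.integral_of_le huv, ← Real.norm_eq_abs]
  refine (norm_integral_le_lintegral_norm _).trans ?_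
  have hle : (∫⁻ s in Set.Ioc u v, ENNReal.ofReal ‖gen r δ a ψ X Y s ω‖ ∂volume)
      ≤ CC r δ a ψ X ω := by
    refine le_trans (lintegral_mono fun s => ?_) (lintegral_mono' (Measure.restrict_mono
      (fun s hs => lt_of_le_of_lt hu hs.1) le_rfl) (le_refl _))
    refine ENNReal.ofReal_le_ofReal ?_
    rw [Real.norm_eq_abs, abs_of_nonneg (gen_nonneg s ω)]
    exact gen_le s ω
  exact ENNReal.toReal_mono hCf hle

lemma path_facts {d : ℕ} {r : ℝ} {δ : Fin d → ℝ} {a : Matrix (Fin d) (Fin d) ℝ}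
    {ψ : (Fin d → ℝ) → ℝ} {X : ℝ → Ω → (Fin d → ℝ)} {Y M : ℝ → Ω → ℝ}
    (h : BSDESol P F r X (Phi r δ a ψ) Y M) :
    ∀ᵐ ω ∂P, (∀ T : ℝ, 0 < T → IntegrableOn (fun s => gen r δ a ψ X Y s ω)
        (Set.Icc 0 T) volume)
      ∧ ∀ u v : ℝ, 0 ≤ u → u ≤ v →
        Y u ω - Y v ω + (M v ω - M u ω) = ∫ s in u..v, gen r δ a ψ X Y s ω := by
  filter_upwards [h.intFin, ae_all_iff.2 (fun n : ℕ => h.eqn (n+1) (by positivity))]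
    with ω hInt heqn
  refine ⟨fun T hT => hInt T hT, fun u v hu huv => ?_⟩
  obtain ⟨n, hn⟩ := exists_nat_gt v
  have hv1 : v ≤ (n:ℝ) + 1 := by linarith
  have hu1 : u ≤ (n:ℝ) + 1 := le_trans huv hv1
  have hIn : IntegrableOn (fun s => gen r δ a ψ X Y s ω) (Set.Icc 0 ((n:ℝ)+1)) volume :=
    hInt ((n:ℝ)+1) (by positivity)
  have II1 : IntervalIntegrable (fun s => gen r δ a ψ X Y s ω) volume u v := by
    refine IntegrableOn.intervalIntegrable ?_
    rw [Set.uIcc_of_le huv]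
    exact hIn.mono_set (Set.Icc_subset_Icc hu hv1)
  have II2 : IntervalIntegrable (fun s => gen r δ a ψ X Y s ω) volume v ((n:ℝ)+1) := by
    refine IntegrableOn.intervalIntegrable ?_
    rw [Set.uIcc_of_le hv1]
    exact hIn.mono_set (Set.Icc_subset_Icc (hu.trans huv) le_rfl)
  have hadd := intervalIntegral.integral_add_adjacent_intervals II1 II2
  have equ := heqn n u ⟨hu, hu1⟩
  have eqv := heqn n v ⟨hu.trans huv, hv1⟩
  rw [show ((n:ℝ)+1) = ((n+1 : ℕ):ℝ) by push_cast; ring] at *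
  unfold gen at *
  linarith [equ, eqv, hadd]

lemma M_dom {d : ℕ} {r : ℝ} {δ : Fin d → ℝ} {a : Matrix (Fin d) (Fin d) ℝ}
    {ψ : (Fin d → ℝ) → ℝ} {X : ℝ → Ω → (Fin d → ℝ)} {Y M : ℝ → Ω → ℝ}
    (h : BSDESol P F r X (Phi r δ a ψ) Y M)
    (hCfin : ∀ᵐ ω ∂P, CC r δ a ψ X ω ≠ ⊤) :
    ∀ᵐ ω ∂P, ∀ v : ℝ, 0 ≤ v →
      |M v ω| ≤ ((CC r δ a ψ X ω).toReal + |Y 0 ω|) + |Y v ω| := by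
  filter_upwards [path_facts h, hCfin] with ω hp hC
  intro v hv
  have e := hp.2 0 v le_rfl hv
  rw [h.M0 ω] at e
  have hb := abs_intervalIntegral_gen_le (Y := Y) hC le_rfl hv
  have : M v ω = (∫ s in (0:ℝ)..v, gen r δ a ψ X Y s ω) - Y 0 ω + Y v ω := by linarith
  rw [this]
  have h1 := abs_add_le ((∫ s in (0:ℝ)..v, gen r δ a ψ X Y s ω) - Y 0 ω) (Y v ω)
  have h2 := abs_sub (∫ s in (0:ℝ)..v, gen r δ a ψ X Y s ω) (Y 0 ω)
  linarith [abs_nonneg (Y 0 ω)]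

lemma CC_measurable {d : ℕ} {r : ℝ} {δ : Fin d → ℝ} {a : Matrix (Fin d) (Fin d) ℝ}
    {ψ : (Fin d → ℝ) → ℝ} {X : ℝ → Ω → (Fin d → ℝ)}
    (hX : Measurable (Function.uncurry X)) (hψm : Measurable (PsiMinus r δ a ψ)) :
    Measurable (CC r δ a ψ X) := by
  have hint : Measurable (fun p : Ω × ℝ =>
      ENNReal.ofReal (Real.exp (-r * p.2) * PsiMinus r δ a ψ (X p.2 p.1))) := by
    refine ENNReal.measurable_ofReal.comp ?_
    refine Measurable.mul ?_ ?_
    · exact Real.measurable_exp.comp (measurable_snd.const_mul _)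
    · exact hψm.comp (hX.comp (measurable_snd.prodMk measurable_fst))
  exact hint.lintegral_prod_right'

end PathFacts
section KeyStep

variable {Ω : Type*} [mΩ : MeasurableSpace Ω]

lemma key_step {d : ℕ} {r : ℝ} {δ : Fin d → ℝ} {a : Matrix (Fin d) (Fin d) ℝ}
    {P : Measure Ω} [IsProbabilityMeasure P] {F : Filtration ℝ mΩ}
    {ψ : (Fin d → ℝ) → ℝ} {X : ℝ → Ω → (Fin d → ℝ)}
    (hCfin : ∀ᵐ ω ∂P, CC r δ a ψ X ω ≠ ⊤)
    (hCr : Integrable (fun ω => (CC r δ a ψ X ω).toReal) P)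
    {Y1 M1 Y2 M2 : ℝ → Ω → ℝ}
    (h1 : BSDESol P F r X (Phi r δ a ψ) Y1 M1)
    (h2 : BSDESol P F r X (Phi r δ a ψ) Y2 M2)
    {t T : ℝ} (ht : 0 ≤ t) (htT : t < T) :
    ∫ ω, Set.indicator {ω' | Y2 t ω' < Y1 t ω'}
        (fun ω' => Y1 t ω' - Y2 t ω') ω ∂P
      ≤ ∫ ω, |Y1 T ω - Y2 T ω| ∂P := by
  classical
  set A : Set Ω := {ω' | Y2 t ω' < Y1 t ω'} with hAdef
  have hA : MeasurableSet[F t] A :=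
    measurableSet_lt (h2.adaptedY t) (h1.adaptedY t)
  set hs : Ω → Set ℝ := fun ω => {s | s ∈ Set.Icc t T ∧ Y1 s ω ≤ Y2 s ω} with hhs
  set σ : Ω → ℝ := fun ω => if hn : (hs ω).Nonempty then sInf (hs ω) else T with hσdef
  set ρ : Ω → ℝ := fun ω => if Y2 t ω < Y1 t ω then σ ω else t with hρdef
  have hclosed : ∀ ω, IsClosed (hs ω) := by
    intro ω
    have : hs ω = Set.Icc t T ∩ {s | Y1 s ω ≤ Y2 s ω} := rfl
    rw [this]
    exact isClosed_Icc.inter (isClosed_le (h1.contY ω) (h2.contY ω))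
  have hbdd : ∀ ω, BddBelow (hs ω) := fun ω => ⟨t, fun s hsmem => hsmem.1.1⟩
  have hσmem : ∀ ω, (hs ω).Nonempty → σ ω ∈ hs ω := by
    intro ω hn
    simp only [hσdef, dif_pos hn]
    exact (hclosed ω).csInf_mem hn (hbdd ω)
  have hσIcc : ∀ ω, σ ω ∈ Set.Icc t T := by
    intro ω
    by_cases hn : (hs ω).Nonempty
    · exact (hσmem ω hn).1
    · simp only [hσdef, dif_neg hn]
      exact ⟨le_of_lt htT, le_rfl⟩
  have hρt : ∀ ω, t ≤ ρ ω := by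
    intro ω
    simp only [hρdef]
    split_ifs with h
    · exact (hσIcc ω).1
    · exact le_rfl
  have hρT : ∀ ω, ρ ω ≤ T := by
    intro ω
    simp only [hρdef]
    split_ifs with h
    · exact (hσIcc ω).2
    · exact le_of_lt htT
  have hρ0 : ∀ ω, 0 ≤ ρ ω := fun ω => ht.trans (hρt ω)
  have hσle : ∀ ω s, s ∈ hs ω → σ ω ≤ s := by
    intro ω s hmem'
    have hn : (hs ω).Nonempty := ⟨s, hmem'⟩
    simp only [hσdef, dif_pos hn]
    exact csInf_le (hbdd ω) hmem'
  have hρst : IsStoppingTime F (fun ω => (ρ ω : WithTop ℝ)) := by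
    rw [isST_coe_iff]
    intro u
    rcases lt_or_ge u t with hu | hu
    · have hempty : {ω | ρ ω ≤ u} = (∅ : Set Ω) := by
        ext ω
        simp only [Set.mem_setOf_eq, Set.mem_empty_iff_false, iff_false, not_le]
        exact lt_of_lt_of_le hu (hρt ω)
      rw [hempty]
      exact @MeasurableSet.empty _ (F u)
    rcases le_or_gt T u with hTu | hTu
    · have huniv : {ω | ρ ω ≤ u} = Set.univ := by
        ext ω
        simp only [Set.mem_setOf_eq, Set.mem_univ, iff_true]
        exact (hρT ω).trans hTu
      rw [huniv]
      exact MeasurableSet.univ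
    · have hkey : {ω | ρ ω ≤ u}
          = Aᶜ ∪ (A ∩ {ω | ∃ s ∈ Set.Icc t u, Y1 s ω ≤ Y2 s ω}) := by
        ext ω
        by_cases hmem : Y2 t ω < Y1 t ω
        · simp only [Set.mem_setOf_eq, Set.mem_union, Set.mem_compl_iff, Set.mem_inter_iff,
            hρdef, if_pos hmem, hAdef]
          constructor
          · intro hσu
            refine Or.inr ⟨hmem, ?_⟩
            have hn : (hs ω).Nonempty := by
              by_contra hn
              have hσT : σ ω = T := by simp only [hσdef, dif_neg hn]
              rw [hσT] at hσu
              exact absurd hσu (not_le.mpr hTu)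
            obtain ⟨⟨hst, _⟩, hY⟩ := hσmem ω hn
            exact ⟨σ ω, ⟨hst, hσu⟩, hY⟩
          · rintro (hc | ⟨_, s, hsIcc, hY⟩)
            · exact absurd hmem hc
            · have hmem' : s ∈ hs ω := ⟨⟨hsIcc.1, hsIcc.2.trans hTu.le⟩, hY⟩
              exact (hσle ω s hmem').trans hsIcc.2
        · simp only [Set.mem_setOf_eq, Set.mem_union, Set.mem_compl_iff, Set.mem_inter_iff,
            hρdef, if_neg hmem, hAdef]
          constructor
          · intro _
            exact Or.inl hmem
          · intro _
            exact hu
      rw [hkey]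
      refine MeasurableSet.union ((F.mono hu _ hA).compl)
        (MeasurableSet.inter (F.mono hu _ hA) ?_)
      exact hitting_measurable_aux h1.contY h2.contY h1.adaptedY h2.adaptedY hu
  -- pointwise a.e. estimate
  have hptwise : ∀ᵐ ω ∂P, A.indicator (fun ω' => Y1 t ω' - Y2 t ω') ω
      + ((M1 (ρ ω) ω - M1 t ω) - (M2 (ρ ω) ω - M2 t ω)) ≤ |Y1 T ω - Y2 T ω| := by
    filter_upwards [path_facts h1, path_facts h2, hCfin] with ω hp1 hp2 hCω
    by_cases hmem : ω ∈ A
    · rw [Set.indicator_of_mem hmem]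
      have hmem' : Y2 t ω < Y1 t ω := hmem
      have hρσ : ρ ω = σ ω := by simp only [hρdef, if_pos hmem']
      have hstrict : ∀ s, t ≤ s → s < ρ ω → Y2 s ω < Y1 s ω := by
        intro s hts hsρ
        by_contra hc
        push_neg at hc
        have hmem'' : s ∈ hs ω := ⟨⟨hts, hsρ.le.trans (hρT ω)⟩, hc⟩
        have := (hσle ω s hmem'')
        rw [hρσ] at hsρ
        exact absurd hsρ (not_lt.mpr this)
      have e1 := hp1.2 t (ρ ω) ht (hρt ω)
      have e2 := hp2.2 t (ρ ω) ht (hρt ω)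
      have hIn1 := hp1.1 (T+1) (by linarith)
      have hIn2 := hp2.1 (T+1) (by linarith)
      have II1 : IntervalIntegrable (fun s => gen r δ a ψ X Y1 s ω) volume t (ρ ω) := by
        refine IntegrableOn.intervalIntegrable ?_
        rw [Set.uIcc_of_le (hρt ω)]
        exact hIn1.mono_set (Set.Icc_subset_Icc ht (by linarith [hρT ω]))
      have II2 : IntervalIntegrable (fun s => gen r δ a ψ X Y2 s ω) volume t (ρ ω) := by
        refine IntegrableOn.intervalIntegrable ?_
        rw [Set.uIcc_of_le (hρt ω)]
        exact hIn2.mono_set (Set.Icc_subset_Icc ht (by linarith [hρT ω]))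
      have hsub := intervalIntegral.integral_sub II1 II2
      have hint_nonpos :
          (∫ s in t..(ρ ω), (gen r δ a ψ X Y1 s ω - gen r δ a ψ X Y2 s ω)) ≤ 0 := by
        rw [intervalIntegral.integral_of_le (hρt ω)]
        refine integral_nonpos_of_ae ?_
        have hmemae : ∀ᵐ s ∂(volume.restrict (Set.Ioc t (ρ ω))), s ∈ Set.Ioc t (ρ ω) :=
          ae_restrict_mem measurableSet_Ioc
        have hne : ∀ᵐ s ∂(volume.restrict (Set.Ioc t (ρ ω))), s ≠ ρ ω := by
          refine ae_restrict_of_ae ?_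
          rw [ae_iff]
          have hset : {s : ℝ | ¬ s ≠ ρ ω} = {ρ ω} := by ext s; simp
          rw [hset]
          exact measure_singleton _
        filter_upwards [hmemae, hne] with s hsmem hsne
        have hsρ : s < ρ ω := lt_of_le_of_ne hsmem.2 hsne
        have hY := hstrict s (le_of_lt hsmem.1) hsρ
        have hphi : Phi r δ a ψ (X s ω) (Real.exp (r*s) * Y1 s ω)
            ≤ Phi r δ a ψ (X s ω) (Real.exp (r*s) * Y2 s ω) := by
          unfold Phi
          by_cases hy1 : Real.exp (r*s) * Y1 s ω ≤ ψ (X s ω)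
          · have hy2 : Real.exp (r*s) * Y2 s ω ≤ ψ (X s ω) :=
              le_trans (mul_le_mul_of_nonneg_left hY.le (Real.exp_nonneg _)) hy1
            rw [if_pos hy1, if_pos hy2]
          · rw [if_neg hy1]
            simp only [mul_zero]
            refine mul_nonneg (psiMinus_nonneg _ _ _ _ _) ?_
            split <;> norm_num
        show gen r δ a ψ X Y1 s ω - gen r δ a ψ X Y2 s ω ≤ 0
        unfold gen
        have hmul := mul_le_mul_of_nonneg_left hphi (Real.exp_nonneg (-r * s))
        linarith
      have hgρ : Y1 (ρ ω) ω - Y2 (ρ ω) ω ≤ |Y1 T ω - Y2 T ω| := by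
        by_cases hn : (hs ω).Nonempty
        · have hY := (hσmem ω hn).2
          rw [hρσ]
          refine le_trans (by linarith) (abs_nonneg (Y1 T ω - Y2 T ω))
        · have hσT : σ ω = T := by simp only [hσdef, dif_neg hn]
          rw [hρσ, hσT]
          exact le_abs_self _
      linarith [e1, e2, hint_nonpos, hgρ, hsub]
    · rw [Set.indicator_of_notMem hmem]
      have hmem' : ¬ (Y2 t ω < Y1 t ω) := hmem
      have hρteq : ρ ω = t := by simp only [hρdef, if_neg hmem']
      rw [hρteq]
      simp [abs_nonneg]
  -- integrability
  have hYt1 : Integrable (fun ω => Y1 t ω) P :=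
    h1.classD.integrable_stopped (σ := fun _ => t) (isStoppingTime_const F t) (fun _ => ht)
  have hYt2 : Integrable (fun ω => Y2 t ω) P :=
    h2.classD.integrable_stopped (σ := fun _ => t) (isStoppingTime_const F t) (fun _ => ht)
  have hInd_int : Integrable (A.indicator (fun ω' => Y1 t ω' - Y2 t ω')) P :=
    (hYt1.sub hYt2).indicator (F.le t _ hA)
  have hb1 : Integrable (fun ω => (CC r δ a ψ X ω).toReal + |Y1 0 ω|) P :=
    hCr.add ((h1.classD.integrable_stopped (σ := fun _ => (0:ℝ))
      (isStoppingTime_const F 0) (fun _ => le_rfl)).abs)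
  have hb2 : Integrable (fun ω => (CC r δ a ψ X ω).toReal + |Y2 0 ω|) P :=
    hCr.add ((h2.classD.integrable_stopped (σ := fun _ => (0:ℝ))
      (isStoppingTime_const F 0) (fun _ => le_rfl)).abs)
  have hdom1 := M_dom h1 hCfin
  have hdom2 := M_dom h2 hCfin
  have hρm : Measurable ρ := measurable_of_isStoppingTime hρst
  have hMρ1_int : Integrable (fun ω => M1 (ρ ω) ω) P := by
    refine Integrable.mono' (hb1.add ((h1.classD.integrable_stopped hρst hρ0).abs))
      ((stronglyMeasurable_stoppedValue' h1.adaptedM h1.contM hρm).aestronglyMeasurable) ?_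
    filter_upwards [hdom1] with ω hω
    rw [Real.norm_eq_abs]
    exact hω (ρ ω) (hρ0 ω)
  have hMρ2_int : Integrable (fun ω => M2 (ρ ω) ω) P := by
    refine Integrable.mono' (hb2.add ((h2.classD.integrable_stopped hρst hρ0).abs))
      ((stronglyMeasurable_stoppedValue' h2.adaptedM h2.contM hρm).aestronglyMeasurable) ?_
    filter_upwards [hdom2] with ω hω
    rw [Real.norm_eq_abs]
    exact hω (ρ ω) (hρ0 ω)
  have hMt1_int : Integrable (fun ω => M1 t ω) P := by
    refine Integrable.mono' (hb1.add ((h1.classD.integrable_stopped (σ := fun _ => t)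
        (isStoppingTime_const F t) fun _ => ht).abs))
      (((h1.adaptedM t).mono (F.le t) le_rfl).aestronglyMeasurable) ?_
    filter_upwards [hdom1] with ω hω
    rw [Real.norm_eq_abs]
    exact hω t ht
  have hMt2_int : Integrable (fun ω => M2 t ω) P := by
    refine Integrable.mono' (hb2.add ((h2.classD.integrable_stopped (σ := fun _ => t)
        (isStoppingTime_const F t) fun _ => ht).abs))
      (((h2.adaptedM t).mono (F.le t) le_rfl).aestronglyMeasurable) ?_
    filter_upwards [hdom2] with ω hω
    rw [Real.norm_eq_abs]
    exact hω t ht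
  have heq1 : ∫ ω, M1 (ρ ω) ω ∂P = ∫ ω, M1 t ω ∂P :=
    integral_stoppedM_eq h1.classD h1.adaptedM h1.contM h1.locMart hb1 hdom1 ht htT.le
      hρst hρt hρT
  have heq2 : ∫ ω, M2 (ρ ω) ω ∂P = ∫ ω, M2 t ω ∂P :=
    integral_stoppedM_eq h2.classD h2.adaptedM h2.contM h2.locMart hb2 hdom2 ht htT.le
      hρst hρt hρT
  have hWint : Integrable
      (fun ω => (M1 (ρ ω) ω - M1 t ω) - (M2 (ρ ω) ω - M2 t ω)) P :=
    (hMρ1_int.sub hMt1_int).sub (hMρ2_int.sub hMt2_int)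
  have hgT_int : Integrable (fun ω => |Y1 T ω - Y2 T ω|) P :=
    ((h1.classD.integrable_stopped (σ := fun _ => T) (isStoppingTime_const F T)
        fun _ => ht.trans htT.le).sub
      (h2.classD.integrable_stopped (σ := fun _ => T) (isStoppingTime_const F T)
        fun _ => ht.trans htT.le)).abs
  have hsum : ∫ ω, (A.indicator (fun ω' => Y1 t ω' - Y2 t ω') ω
      + ((M1 (ρ ω) ω - M1 t ω) - (M2 (ρ ω) ω - M2 t ω))) ∂P
      ≤ ∫ ω, |Y1 T ω - Y2 T ω| ∂P :=
    integral_mono_ae (hInd_int.add hWint) hgT_int hptwise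
  rw [integral_add hInd_int hWint] at hsum
  have hW1_int : Integrable (fun ω => M1 (ρ ω) ω - M1 t ω) P := hMρ1_int.sub hMt1_int
  have hW2_int : Integrable (fun ω => M2 (ρ ω) ω - M2 t ω) P := hMρ2_int.sub hMt2_int
  have hW0 : ∫ ω, ((M1 (ρ ω) ω - M1 t ω) - (M2 (ρ ω) ω - M2 t ω)) ∂P = 0 := by
    rw [integral_sub hW1_int hW2_int,
      integral_sub hMρ1_int hMt1_int, integral_sub hMρ2_int hMt2_int, heq1, heq2]
    ring
  rw [hW0] at hsum
  linarith

end KeyStep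
section Key

variable {Ω : Type*} [mΩ : MeasurableSpace Ω]

lemma key_le {d : ℕ} {r : ℝ} {δ : Fin d → ℝ} {a : Matrix (Fin d) (Fin d) ℝ}
    {P : Measure Ω} [IsProbabilityMeasure P] {F : Filtration ℝ mΩ}
    {ψ : (Fin d → ℝ) → ℝ} {X : ℝ → Ω → (Fin d → ℝ)}
    (hCmeas : Measurable (CC r δ a ψ X))
    (hCint : (∫⁻ ω, CC r δ a ψ X ω ∂P) ≠ ⊤)
    {Y1 M1 Y2 M2 : ℝ → Ω → ℝ}
    (h1 : BSDESol P F r X (Phi r δ a ψ) Y1 M1)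
    (h2 : BSDESol P F r X (Phi r δ a ψ) Y2 M2)
    {t : ℝ} (ht : 0 ≤ t) :
    ∀ᵐ ω ∂P, Y1 t ω ≤ Y2 t ω := by
  have hCfin : ∀ᵐ ω ∂P, CC r δ a ψ X ω ≠ ⊤ :=
    (ae_lt_top hCmeas hCint).mono fun ω h => h.ne
  have hCr : Integrable (fun ω => (CC r δ a ψ X ω).toReal) P :=
    integrable_toReal_of_lintegral_ne_top hCmeas.aemeasurable hCint
  set A : Set Ω := {ω' | Y2 t ω' < Y1 t ω'} with hAdef
  have hA : MeasurableSet[F t] A :=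
    measurableSet_lt (h2.adaptedY t) (h1.adaptedY t)
  have hYt1 : Integrable (fun ω => Y1 t ω) P :=
    h1.classD.integrable_stopped (σ := fun _ => t) (isStoppingTime_const F t) (fun _ => ht)
  have hYt2 : Integrable (fun ω => Y2 t ω) P :=
    h2.classD.integrable_stopped (σ := fun _ => t) (isStoppingTime_const F t) (fun _ => ht)
  have hInd_int : Integrable (A.indicator (fun ω' => Y1 t ω' - Y2 t ω')) P :=
    (hYt1.sub hYt2).indicator (F.le t _ hA)
  have hTj : ∀ j : ℕ, (0:ℝ) ≤ t + 1 + j := fun j => by positivity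
  have hstep : ∀ j : ℕ, ∫ ω, A.indicator (fun ω' => Y1 t ω' - Y2 t ω') ω ∂P
      ≤ ∫ ω, |Y1 (t+1+j) ω - Y2 (t+1+j) ω| ∂P := by
    intro j
    refine key_step hCfin hCr h1 h2 ht ?_
    have : (0:ℝ) ≤ j := Nat.cast_nonneg j
    linarith
  have hlim : Tendsto (fun j : ℕ => ∫ ω, |Y1 (t+1+j) ω - Y2 (t+1+j) ω| ∂P)
      atTop (nhds 0) := by
    have haesm : ∀ i j : ℕ, True := fun _ _ => trivial
    have hfm : ∀ j : ℕ, AEStronglyMeasurable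
        (fun ω => |Y1 (t+1+j) ω - Y2 (t+1+j) ω|) P := by
      intro j
      have := ((h1.classD.aesm (σ := fun _ => t+1+j) (isStoppingTime_const F _)
        (fun _ => hTj j)).sub (h2.classD.aesm (σ := fun _ => t+1+j)
        (isStoppingTime_const F _) (fun _ => hTj j))).norm
      simpa only [Real.norm_eq_abs, Pi.sub_apply] using this
    have hfi : ∀ j : ℕ, Integrable (fun ω => |Y1 (t+1+j) ω - Y2 (t+1+j) ω|) P := by
      intro j
      exact ((h1.classD.integrable_stopped (σ := fun _ => t+1+j)
        (isStoppingTime_const F _) (fun _ => hTj j)).sub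
        (h2.classD.integrable_stopped (σ := fun _ => t+1+j)
          (isStoppingTime_const F _) (fun _ => hTj j))).abs
    have hui : UnifIntegrable
        (fun (j : ℕ) ω => |Y1 (t+1+j) ω - Y2 (t+1+j) ω|) 1 P := by
      refine unifIntegrable_of_abs_le (u := fun j ω => Y1 (t+1+j) ω)
        (v := fun j ω => Y2 (t+1+j) ω)
        (h1.classD.unifIntegrable (σ := fun j _ => t+1+j)
          (fun j => isStoppingTime_const F _) (fun j ω => hTj j))
        (fun j => h1.classD.aesm (σ := fun _ => t+1+j) (isStoppingTime_const F _)
          (fun _ => hTj j))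
        (h2.classD.unifIntegrable (σ := fun j _ => t+1+j)
          (fun j => isStoppingTime_const F _) (fun j ω => hTj j))
        (fun j => h2.classD.aesm (σ := fun _ => t+1+j) (isStoppingTime_const F _)
          (fun _ => hTj j)) ?_
      intro j
      refine Eventually.of_forall fun ω => ?_
      rw [abs_abs]
      exact abs_sub _ _
    have hae : ∀ᵐ ω ∂P, Tendsto (fun j : ℕ => |Y1 (t+1+j) ω - Y2 (t+1+j) ω|)
        atTop (nhds 0) := by
      filter_upwards [h1.limY, h2.limY] with ω hl1 hl2
      have hseq : Tendsto (fun j : ℕ => t + 1 + (j:ℝ)) atTop atTop :=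
        tendsto_atTop_add_const_left _ _ tendsto_natCast_atTop_atTop
      have := ((hl1.comp hseq).sub (hl2.comp hseq)).abs
      simpa using this
    have := tendsto_integral_of_ae_tendsto hfm hfi
      (memLp_one_iff_integrable.mpr (integrable_zero _ _ _)) hui
      (by simpa using hae)
    simpa using this
  have hle0 : ∫ ω, A.indicator (fun ω' => Y1 t ω' - Y2 t ω') ω ∂P ≤ 0 :=
    ge_of_tendsto hlim (Eventually.of_forall hstep)
  have hnn : ∀ ω, 0 ≤ A.indicator (fun ω' => Y1 t ω' - Y2 t ω') ω := by
    intro ω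
    refine Set.indicator_nonneg (fun ω' hω' => ?_) ω
    have : Y2 t ω' < Y1 t ω' := hω'
    linarith
  have hint0 : ∫ ω, A.indicator (fun ω' => Y1 t ω' - Y2 t ω') ω ∂P = 0 :=
    le_antisymm hle0 (integral_nonneg hnn)
  have hae0 := (integral_eq_zero_iff_of_nonneg hnn hInd_int).mp hint0
  filter_upwards [hae0] with ω hω
  by_contra hc
  push_neg at hc
  have hmem : ω ∈ A := hc
  have := Set.indicator_of_mem hmem (fun ω' => Y1 t ω' - Y2 t ω')
  have hω' : A.indicator (fun ω' => Y1 t ω' - Y2 t ω') ω = 0 := hω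
  rw [this] at hω'
  linarith

end Key
set_option maxHeartbeats 2000000 in
theorem bsde_uniqueness {Ω : Type*} [mΩ : MeasurableSpace Ω] {d : ℕ} (hd : 1 ≤ d)
    (r : ℝ) (hr : 0 ≤ r) (δ : Fin d → ℝ) (hδ : ∀ i, 0 ≤ δ i)
    (a σm : Matrix (Fin d) (Fin d) ℝ)
    (ha : a.IsSymm) (haP : a.PosDef) (hσs : σm.IsSymm) (hσP : σm.PosDef)
    (hsq : σm * σm = a)
    (P : Measure Ω) [IsProbabilityMeasure P] (F : Filtration ℝ mΩ)
    (B : Fin d → ℝ → Ω → ℝ) (hB : IsStdBM P F B)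
    (ψ : (Fin d → ℝ) → ℝ) (L : ℝ) (hψ : A1 ψ L)
    (x : Fin d → ℝ) (hx : x ∈ posOrth d)
    (hA2 : A2at P r δ a ψ (price r δ a σm B x))
    (Y1 M1 Y2 M2 : ℝ → Ω → ℝ)
    (h1 : BSDESol P F r (price r δ a σm B x) (Phi r δ a ψ) Y1 M1)
    (h2 : BSDESol P F r (price r δ a σm B x) (Phi r δ a ψ) Y2 M2) :
    (∀ᵐ ω ∂P, ∀ t : ℝ, 0 ≤ t → Y1 t ω = Y2 t ω) ∧
    (∀ᵐ ω ∂P, ∀ t : ℝ, 0 ≤ t → M1 t ω = M2 t ω) := by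
  have hψc : Continuous ψ := continuous_of_A1 hψ
  have hψm : Measurable (PsiMinus r δ a ψ) := measurable_psiMinus r δ a hψc
  obtain ⟨hB0, hBc, hBad, hBind, hBgauss, hBiid⟩ := hB
  have hBm : ∀ j s, Measurable (B j s) := fun j s => (hBad j s).mono (F.le s) le_rfl
  have hBjoint : ∀ j, Measurable (Function.uncurry (B j)) := fun j =>
    measurable_uncurry_of_continuous_of_measurable (fun ω => hBc j ω) (fun s => hBm j s)
  have hXjoint : Measurable (Function.uncurry (price r δ a σm B x)) := by
    refine measurable_pi_lambda _ fun i => ?_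
    refine Measurable.const_mul ?_ _
    refine Real.measurable_exp.comp ?_
    refine Measurable.add ?_ ?_
    · exact measurable_fst.const_mul _
    · exact Finset.measurable_sum _ fun j _ => (hBjoint j).const_mul _
  have hCmeas : Measurable (CC r δ a ψ (price r δ a σm B x)) :=
    CC_measurable hXjoint hψm
  have hCint : (∫⁻ ω, CC r δ a ψ (price r δ a σm B x) ω ∂P) ≠ ⊤ := hA2.2.ne
  have hYq : ∀ᵐ ω ∂P, ∀ q : ℚ, 0 ≤ (q:ℝ) → Y1 (q:ℝ) ω = Y2 (q:ℝ) ω := by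
    rw [ae_all_iff]
    intro q
    by_cases hq : 0 ≤ (q:ℝ)
    · filter_upwards [key_le hCmeas hCint h1 h2 hq, key_le hCmeas hCint h2 h1 hq]
        with ω w1 w2
      intro _
      exact le_antisymm w1 w2
    · exact Eventually.of_forall fun ω hq' => absurd hq' hq
  have hYpart : ∀ᵐ ω ∂P, ∀ t : ℝ, 0 ≤ t → Y1 t ω = Y2 t ω := by
    filter_upwards [hYq] with ω hq
    intro t ht
    have hch : ∀ n : ℕ, ∃ q : ℚ, t < (q:ℝ) ∧ (q:ℝ) < t + 1/(n+1) := by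
      intro n
      refine exists_rat_btwn ?_
      have hpos : (0:ℝ) < 1/((n:ℝ)+1) := by positivity
      linarith
    choose qn hq1 hq2 using hch
    have hupper : Tendsto (fun n : ℕ => t + 1/((n:ℝ)+1)) atTop (nhds t) := by
      have := (tendsto_const_nhds :
        Tendsto (fun _ : ℕ => t) atTop (nhds t)).add tendsto_one_div_add_atTop_nhds_zero_nat
      simpa using this
    have hqt : Tendsto (fun n => ((qn n : ℝ))) atTop (nhds t) :=
      tendsto_of_tendsto_of_tendsto_of_le_of_le tendsto_const_nhds hupper
        (fun n => (hq1 n).le) (fun n => (hq2 n).le)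
    have h1t := ((h1.contY ω).tendsto t).comp hqt
    have h2t := ((h2.contY ω).tendsto t).comp hqt
    have heqseq : ((fun s => Y1 s ω) ∘ fun n => ((qn n : ℝ)))
        = ((fun s => Y2 s ω) ∘ fun n => ((qn n : ℝ))) :=
      funext fun n => hq (qn n) (ht.trans (hq1 n).le)
    rw [heqseq] at h1t
    exact tendsto_nhds_unique h1t h2t
  refine ⟨hYpart, ?_⟩
  filter_upwards [hYpart, path_facts h1, path_facts h2] with ω hY hp1 hp2
  intro t ht
  have e1 := hp1.2 0 t le_rfl ht
  have e2 := hp2.2 0 t le_rfl ht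
  rw [h1.M0 ω] at e1
  rw [h2.M0 ω] at e2
  have hgen : ∫ s in (0:ℝ)..t, gen r δ a ψ (price r δ a σm B x) Y1 s ω
      = ∫ s in (0:ℝ)..t, gen r δ a ψ (price r δ a σm B x) Y2 s ω := by
    refine intervalIntegral.integral_congr fun s hsmem => ?_
    rw [Set.uIcc_of_le ht] at hsmem
    unfold gen
    rw [hY s hsmem.1]
  have hY0 := hY 0 le_rfl
  have hYt := hY t ht
  linarith

end Perp
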